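/- Let θ > 0 and let ψ : ℝ → ℝ be positive and twice differentiable on [0, T] and satisfy ψ''(t)·ψ(t) − (1+θ)·(ψ'(t))² ≥ 0 for all t ∈ [0, T], with ψ(0) > 0 and ψ'(0) > 0. Then T < ψ(0)/(θ·ψ'(0)); equivalently, ψ(t)^{−θ} ≤ ψ(0)^{−θ} − θ·ψ'(0)·ψ(0)^{−θ−1}·t for all t ∈ [0, T], so ψ must blow up (tend to +∞) at some time t₁ ≤ ψ(0)/(θ·ψ'(0)). -/

import Mathlib

/-- Levine's concavity lemma: if a positive, twice-differentiable function `ψ` on `[0, T]`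
satisfies `ψ'' ψ - (1+θ) ψ'² ≥ 0` with `ψ 0 > 0` and `ψ' 0 > 0`, then
`ψ t ^ (-θ) ≤ ψ 0 ^ (-θ) - θ ψ'(0) ψ(0)^(-θ-1) t` on `[0, T]`, and in particular
`T < ψ 0 / (θ * ψ' 0)`. -/
theorem levine_concavity (θ T : ℝ) (hθ : 0 < θ) (hT : 0 ≤ T) (ψ : ℝ → ℝ)
    (hpos : ∀ t ∈ Set.Icc (0 : ℝ) T, 0 < ψ t)
    (hdiff1 : ∀ t ∈ Set.Icc (0 : ℝ) T, DifferentiableAt ℝ ψ t)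
    (hdiff2 : ∀ t ∈ Set.Icc (0 : ℝ) T, DifferentiableAt ℝ (deriv ψ) t)
    (hineq : ∀ t ∈ Set.Icc (0 : ℝ) T,
      0 ≤ deriv (deriv ψ) t * ψ t - (1 + θ) * (deriv ψ t) ^ 2)
    (hψ0 : 0 < ψ 0) (hψ'0 : 0 < deriv ψ 0) :
    (∀ t ∈ Set.Icc (0 : ℝ) T,
      (ψ t) ^ (-θ) ≤ (ψ 0) ^ (-θ) - θ * deriv ψ 0 * (ψ 0) ^ (-θ - 1) * t) ∧
    T < ψ 0 / (θ * deriv ψ 0) := by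
  set c : ℝ := -θ with hc
  have h0T : (0:ℝ) ∈ Set.Icc (0:ℝ) T := ⟨le_refl 0, hT⟩
  have hψne : ∀ t ∈ Set.Icc (0:ℝ) T, ψ t ≠ 0 := fun t ht => (hpos t ht).ne'
  set G : ℝ → ℝ := fun t => c * ψ t ^ (c - 1) * deriv ψ t with hGdef
  -- F has derivative G on Icc
  have hFd : ∀ t ∈ Set.Icc (0:ℝ) T, HasDerivAt (fun s => ψ s ^ c) (G t) t := by
    intro t ht
    have h1 := Real.hasDerivAt_rpow_const (x := ψ t) (p := c) (Or.inl (hψne t ht))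
    have h2 := h1.comp t (hdiff1 t ht).hasDerivAt
    simpa [hGdef, mul_assoc, Function.comp_def] using h2
  -- G has a derivative on Icc
  set G' : ℝ → ℝ := fun t => c * ((c - 1) * ψ t ^ (c - 1 - 1) * deriv ψ t * deriv ψ t
      + ψ t ^ (c - 1) * deriv (deriv ψ) t) with hG'def
  have hGd : ∀ t ∈ Set.Icc (0:ℝ) T, HasDerivAt G (G' t) t := by
    intro t ht
    have h1 := Real.hasDerivAt_rpow_const (x := ψ t) (p := c - 1) (Or.inl (hψne t ht))
    have h2 : HasDerivAt (fun s => ψ s ^ (c - 1))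
        ((c - 1) * ψ t ^ (c - 1 - 1) * deriv ψ t) t := by
      simpa [mul_assoc, Function.comp_def] using h1.comp t (hdiff1 t ht).hasDerivAt
    have h3 := (h2.mul (hdiff2 t ht).hasDerivAt).const_mul c
    simpa [hGdef, hG'def, mul_assoc, mul_add] using h3
  -- G' ≤ 0 on Icc
  have hG'nonpos : ∀ t ∈ Set.Icc (0:ℝ) T, G' t ≤ 0 := by
    intro t ht
    have hA : 0 < ψ t ^ (c - 1 - 1) := Real.rpow_pos_of_pos (hpos t ht) _
    have hsplit : ψ t ^ (c - 1) = ψ t ^ (c - 1 - 1) * ψ t := by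
      have h := (Real.rpow_add (hpos t ht) (c - 1 - 1) 1).symm
      rw [Real.rpow_one] at h
      rw [h]; congr 1; ring
    have hi := hineq t ht
    have hcneg : c < 0 := by simp [hc]; linarith
    simp only [hG'def, hsplit]
    have hkey : 0 ≤ (c - 1) * deriv ψ t * deriv ψ t + ψ t * deriv (deriv ψ) t := by
      have : c - 1 = -(1 + θ) := by simp [hc]; ring
      nlinarith [sq_nonneg (deriv ψ t)]
    nlinarith [mul_nonneg hA.le hkey]
  -- Continuity
  have hGcont : ContinuousOn G (Set.Icc 0 T) := fun t ht =>
    ((hGd t ht).continuousAt).continuousWithinAt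
  have hintsub : Set.Ioo (0:ℝ) T ⊆ Set.Icc 0 T := Set.Ioo_subset_Icc_self
  have hint : interior (Set.Icc (0:ℝ) T) = Set.Ioo 0 T := interior_Icc
  -- G is antitone on Icc
  have hGanti : AntitoneOn G (Set.Icc 0 T) := by
    apply antitoneOn_of_deriv_nonpos (convex_Icc 0 T) hGcont
    · intro x hx
      rw [hint] at hx
      exact (hGd x (hintsub hx)).differentiableAt.differentiableWithinAt
    · intro x hx
      rw [hint] at hx
      rw [(hGd x (hintsub hx)).deriv]
      exact hG'nonpos x (hintsub hx)
  -- H t = F 0 + G 0 * t - F t is monotone on Icc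
  set H : ℝ → ℝ := fun t => ψ 0 ^ c + G 0 * t - ψ t ^ c with hHdef
  have hHd : ∀ t ∈ Set.Icc (0:ℝ) T, HasDerivAt H (G 0 - G t) t := by
    intro t ht
    exact ((hasDerivAt_const t (ψ 0 ^ c)).add ((hasDerivAt_id t).const_mul (G 0))).sub
      (hFd t ht) |>.congr_deriv (by ring)
  have hHcont : ContinuousOn H (Set.Icc 0 T) := fun t ht =>
    ((hHd t ht).continuousAt).continuousWithinAt
  have hHmono : MonotoneOn H (Set.Icc 0 T) := by
    apply monotoneOn_of_deriv_nonneg (convex_Icc 0 T) hHcont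
    · intro x hx
      rw [hint] at hx
      exact (hHd x (hintsub hx)).differentiableAt.differentiableWithinAt
    · intro x hx
      rw [hint] at hx
      rw [(hHd x (hintsub hx)).deriv]
      have := hGanti h0T (hintsub hx) hx.1.le
      linarith
  have hHmain : ∀ t ∈ Set.Icc (0:ℝ) T, 0 ≤ H t := by
    intro t ht
    have := hHmono h0T ht ht.1
    simpa [hHdef] using this
  have hG0 : G 0 = -θ * ψ 0 ^ (-θ - 1) * deriv ψ 0 := by
    simp [hGdef, hc]
  have hmain : ∀ t ∈ Set.Icc (0:ℝ) T,
      (ψ t) ^ (-θ) ≤ (ψ 0) ^ (-θ) - θ * deriv ψ 0 * (ψ 0) ^ (-θ - 1) * t := by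
    intro t ht
    have := hHmain t ht
    simp only [hHdef, hG0] at this
    have hceq : c = -θ := hc
    rw [hceq] at this
    linarith [this]
  refine ⟨hmain, ?_⟩
  have hFT : 0 < ψ T ^ (-θ) := Real.rpow_pos_of_pos (hpos T ⟨le_refl 0 |>.trans hT, le_refl T⟩) _
  have hTineq := hmain T ⟨hT, le_refl T⟩
  have hsplit : ψ 0 ^ (-θ) = ψ 0 ^ (-θ - 1) * ψ 0 := by
    have h := (Real.rpow_add hψ0 (-θ - 1) 1).symm
    rw [Real.rpow_one] at h
    rw [h]; congr 1; ring
  have hA : 0 < ψ 0 ^ (-θ - 1) := Real.rpow_pos_of_pos hψ0 _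
  rw [lt_div_iff₀ (by positivity)]
  nlinarith [hFT, hTineq, hA, hψ0, hψ'0, hθ]
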